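/- Fix x ∈ ℝ^{d_x} and assume: for all y, ‖∇_y f(x,y)‖ ≤ ℓ_{f,0}; the maps y ↦ ∇_x f(x,y) and y ↦ ∇_y f(x,y) are ℓ_{f,1}-Lipschitz; for all y, ∇_{yy} g(x,y) is symmetric with μ_g I ⪯ ∇_{yy} g(x,y) (μ_g > 0) and ‖∇_{yy} g(x,y)‖ ≤ ℓ_{g,1} and ‖∇_{xy} g(x,y)‖ ≤ ℓ_{g,1}; the maps y ↦ ∇_{yy} g(x,y) and y ↦ ∇_{xy} g(x,y) are ℓ_{g,2}-Lipschitz in spectral norm; and ‖∇h(x)‖ ≤ ℓ_{h,0}. Then for all y₁, y₂ ∈ ℝ^{d_y}, ‖∇̄f(x,y₁) − ∇̄f(x,y₂)‖ ≤ L_f ‖y₁ − y₂‖, where L_f := (1 + ℓ_{h,0}‖A⁺‖)(ℓ_{f,1} + (ℓ_{g,1} ℓ_{f,1} + ℓ_{f,0} ℓ_{g,2})/μ_g + ℓ_{f,0} ℓ_{g,1} ℓ_{g,2}/μ_g²). -/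

import Mathlib

open Matrix
open scoped Kronecker

noncomputable section

/-- `ℝ^n` with the Euclidean inner product. -/
abbrev Euc (n : ℕ) : Type := EuclideanSpace ℝ (Fin n)

/-- Reinterpret a plain vector as an element of Euclidean space. -/
def toEuc {n : ℕ} (v : Fin n → ℝ) : Euc n := WithLp.toLp 2 v

/-- Spectral (operator) norm of a real matrix. -/
def specNorm {m n : Type*} [Fintype m] [Fintype n] [DecidableEq n]
    (M : Matrix m n ℝ) : ℝ :=
  ‖LinearMap.toContinuousLinearMap (Matrix.toEuclideanLin M)‖

/-- The four Moore–Penrose identities. -/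
def IsMoorePenrose {a b : ℕ} (A : Matrix (Fin a) (Fin b) ℝ)
    (Ap : Matrix (Fin b) (Fin a) ℝ) : Prop :=
  A * Ap * A = A ∧ Ap * A * Ap = Ap ∧ (A * Ap)ᵀ = A * Ap ∧ (Ap * A)ᵀ = Ap * A

/-- Partial gradient in the first variable. -/
def gradx {dx dy : ℕ} (f : Euc dx → Euc dy → ℝ) (x : Euc dx) (y : Euc dy) : Euc dx :=
  gradient (fun x' => f x' y) x

/-- Partial gradient in the second variable. -/
def grady {dx dy : ℕ} (f : Euc dx → Euc dy → ℝ) (x : Euc dx) (y : Euc dy) : Euc dy :=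
  gradient (fun y' => f x y') y

/-- Jacobian matrix of a vector-valued map: entry `(i, j)` is `∂φ_i/∂x_j`. -/
def jacM {n m : ℕ} (φ : Euc n → Euc m) (x : Euc n) : Matrix (Fin m) (Fin n) ℝ :=
  Matrix.of fun i j => fderiv ℝ φ x (EuclideanSpace.single j (1 : ℝ)) i

/-- `∇_{yy} g(x,y)`: entry `(i, j)` is `∂²g/∂y_i∂y_j`. -/
def hessYY {dx dy : ℕ} (g : Euc dx → Euc dy → ℝ) (x : Euc dx) (y : Euc dy) :
    Matrix (Fin dy) (Fin dy) ℝ :=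
  Matrix.of fun i j => gradient (fun y' => grady g x y' j) y i

/-- `∇_{xy} g(x,y)`: entry `(i, j)` is `∂²g/∂x_i∂y_j`. -/
def hessXY {dx dy : ℕ} (g : Euc dx → Euc dy → ℝ) (x : Euc dx) (y : Euc dy) :
    Matrix (Fin dx) (Fin dy) ℝ :=
  Matrix.of fun i j => gradient (fun x' => grady g x' y j) x i

/-- `∇_{yx} g(x,y)`: entry `(i, j)` is `∂²g/∂y_i∂x_j`. -/
def hessYX {dx dy : ℕ} (g : Euc dx → Euc dy → ℝ) (x : Euc dx) (y : Euc dy) :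
    Matrix (Fin dy) (Fin dx) ℝ :=
  Matrix.of fun i j => gradient (fun y' => gradx g x y' j) y i

/-- `∇_{xx} g(x,y)`. -/
def hessXX {dx dy : ℕ} (g : Euc dx → Euc dy → ℝ) (x : Euc dx) (y : Euc dy) :
    Matrix (Fin dx) (Fin dx) ℝ :=
  Matrix.of fun i j => gradient (fun x' => gradx g x' y j) x i

/-- The surrogate upper-level gradient `∇̄f(x,y)`. -/
def nablaBarF {dx dy my k : ℕ} (Ap : Matrix (Fin dy) (Fin my) ℝ)
    (V₂ : Matrix (Fin dy) (Fin k) ℝ) (f g : Euc dx → Euc dy → ℝ)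
    (h : Euc dx → Euc my) (x : Euc dx) (y : Euc dy) : Euc dx :=
  gradx f x y + toEuc
    ((((jacM h x)ᵀ * Apᵀ * hessYY g x y - hessXY g x y) * V₂ *
        (V₂ᵀ * hessYY g x y * V₂)⁻¹ * V₂ᵀ - (jacM h x)ᵀ * Apᵀ).mulVec (grady f x y))

open scoped Matrix.Norms.L2Operator

lemma specNorm_eq {m n : ℕ} (M : Matrix (Fin m) (Fin n) ℝ) : specNorm M = ‖M‖ := rfl

lemma transpose_eq_conjT {m n : ℕ} (M : Matrix (Fin m) (Fin n) ℝ) : Mᵀ = Mᴴ := by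
  ext i j; simp [Matrix.conjTranspose_apply]

lemma l2_norm_transpose {m n : ℕ} (M : Matrix (Fin m) (Fin n) ℝ) : ‖Mᵀ‖ = ‖M‖ := by
  rw [transpose_eq_conjT, Matrix.l2_opNorm_conjTranspose]

lemma norm_toEuc_mulVec_le {m n : ℕ} (M : Matrix (Fin m) (Fin n) ℝ) (v : Euc n) :
    ‖toEuc (M *ᵥ v)‖ ≤ ‖M‖ * ‖v‖ := Matrix.l2_opNorm_mulVec M v

lemma matrix_norm_le {m n : ℕ} (M : Matrix (Fin m) (Fin n) ℝ) {c : ℝ} (hc : 0 ≤ c)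
    (h : ∀ v : Euc n, ‖toEuc (M *ᵥ v)‖ ≤ c * ‖v‖) : ‖M‖ ≤ c := by
  rw [Matrix.l2_opNorm_def]
  exact ContinuousLinearMap.opNorm_le_bound _ hc fun v => h v

lemma dot_eq_inner {n : ℕ} (a b : Fin n → ℝ) :
    a ⬝ᵥ b = (inner ℝ (toEuc a) (toEuc b) : ℝ) := by
  simp [dotProduct, PiLp.inner_apply, toEuc, mul_comm]

lemma norm_mul_le_of {m n l : ℕ} {A : Matrix (Fin m) (Fin n) ℝ} {B : Matrix (Fin n) (Fin l) ℝ}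
    {a b : ℝ} (hA : ‖A‖ ≤ a) (hB : ‖B‖ ≤ b) : ‖A * B‖ ≤ a * b :=
  le_trans (Matrix.l2_opNorm_mul A B)
    (mul_le_mul hA hB (norm_nonneg _) (le_trans (norm_nonneg _) hA))
lemma dot_self_eq_normsq {n : ℕ} (a : Fin n → ℝ) : a ⬝ᵥ a = ‖toEuc a‖ ^ 2 := by
  rw [dot_eq_inner, real_inner_self_eq_norm_sq]

lemma inv_bound {k : ℕ} {μ : ℝ} (hμ : 0 < μ) (B : Matrix (Fin k) (Fin k) ℝ)
    (hB : (B - μ • (1 : Matrix (Fin k) (Fin k) ℝ)).PosSemidef) :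
    B * B⁻¹ = 1 ∧ B⁻¹ * B = 1 ∧ ‖B⁻¹‖ ≤ 1 / μ := by
  have hBh : B.IsHermitian := by
    have h1 := hB.1
    unfold Matrix.IsHermitian at h1 ⊢
    rw [Matrix.conjTranspose_sub, Matrix.conjTranspose_smul] at h1
    have h1' : Bᴴ - μ • (1 : Matrix (Fin k) (Fin k) ℝ) = B - μ • 1 := by simpa using h1
    exact sub_left_inj.mp h1'
  have hlow : ∀ w : Fin k → ℝ, μ * (w ⬝ᵥ w) ≤ w ⬝ᵥ (B *ᵥ w) := by
    intro w
    have h0 := hB.dotProduct_mulVec_nonneg w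
    simp only [Matrix.sub_mulVec, Matrix.smul_mulVec, Matrix.one_mulVec, star_trivial,
      dotProduct_sub, dotProduct_smul, smul_eq_mul] at h0
    linarith
  have hpd : B.PosDef := by
    refine Matrix.PosDef.of_dotProduct_mulVec_pos hBh fun w hw => ?_
    have h1 := hlow w
    have h2 : 0 < w ⬝ᵥ w := by
      rw [dot_self_eq_normsq]
      have hne : toEuc w ≠ 0 := fun he => hw (congrArg WithLp.ofLp he)
      exact pow_pos (norm_pos_iff.mpr hne) 2
    simp only [star_trivial]
    nlinarith
  have hdet : IsUnit B.det := (Matrix.isUnit_iff_isUnit_det B).mp hpd.isUnit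
  have h1 : B * B⁻¹ = 1 := Matrix.mul_nonsing_inv B hdet
  have h2 : B⁻¹ * B = 1 := Matrix.nonsing_inv_mul B hdet
  refine ⟨h1, h2, ?_⟩
  apply matrix_norm_le _ (by positivity)
  intro v
  set w : Euc k := toEuc (B⁻¹ *ᵥ v) with hw
  have hBw : B *ᵥ (B⁻¹ *ᵥ (v : Fin k → ℝ)) = v := by
    rw [Matrix.mulVec_mulVec, h1, Matrix.one_mulVec]
  have key : μ * ‖w‖ ^ 2 ≤ ‖w‖ * ‖v‖ := by
    have hl := hlow (B⁻¹ *ᵥ v)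
    rw [hBw, dot_self_eq_normsq, dot_eq_inner] at hl
    have h3 := real_inner_le_norm (toEuc (B⁻¹ *ᵥ (v : Fin k → ℝ))) v
    calc μ * ‖w‖ ^ 2 ≤ (inner ℝ (toEuc (B⁻¹ *ᵥ (v : Fin k → ℝ))) (toEuc (v : Fin k → ℝ)) : ℝ) := hl
      _ ≤ ‖w‖ * ‖v‖ := h3
  rcases eq_or_lt_of_le (norm_nonneg w) with h | h
  · rw [← h]; positivity
  · have h3 : μ * ‖w‖ ≤ ‖v‖ := by nlinarith
    calc ‖w‖ = (1/μ) * (μ * ‖w‖) := by field_simp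
      _ ≤ (1/μ) * ‖v‖ := mul_le_mul_of_nonneg_left h3 (by positivity)
      _ = 1/μ * ‖v‖ := rfl

lemma norm_V2_le {dy k : ℕ} (V₂ : Matrix (Fin dy) (Fin k) ℝ) (hV₂ : V₂ᵀ * V₂ = 1) :
    ‖V₂‖ ≤ 1 := by
  apply matrix_norm_le _ zero_le_one
  intro v
  have hdot : (V₂ *ᵥ (v : Fin k → ℝ)) ⬝ᵥ (V₂ *ᵥ (v : Fin k → ℝ)) = (v : Fin k → ℝ) ⬝ᵥ v := by
    rw [Matrix.dotProduct_mulVec, ← Matrix.mulVec_transpose, Matrix.mulVec_mulVec, hV₂,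
      Matrix.one_mulVec]
  have hsq : ‖toEuc (V₂ *ᵥ (v : Fin k → ℝ))‖ ^ 2 = ‖v‖ ^ 2 := by
    rw [← dot_self_eq_normsq, hdot, dot_self_eq_normsq]; rfl
  nlinarith [norm_nonneg (toEuc (V₂ *ᵥ (v : Fin k → ℝ))), norm_nonneg v]
lemma inv_diff {k : ℕ} {μ : ℝ} (hμ : 0 < μ) (B₁ B₂ : Matrix (Fin k) (Fin k) ℝ)
    (h₁ : (B₁ - μ • (1 : Matrix (Fin k) (Fin k) ℝ)).PosSemidef)
    (h₂ : (B₂ - μ • (1 : Matrix (Fin k) (Fin k) ℝ)).PosSemidef) :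
    B₁⁻¹ - B₂⁻¹ = B₁⁻¹ * (B₂ - B₁) * B₂⁻¹ := by
  obtain ⟨-, hA2, -⟩ := inv_bound hμ B₁ h₁
  obtain ⟨hB1, -, -⟩ := inv_bound hμ B₂ h₂
  rw [Matrix.mul_sub, Matrix.sub_mul, Matrix.mul_assoc, hB1, Matrix.mul_one, hA2,
    Matrix.one_mul]

section Aux
variable {dx dy my k : ℕ}

def auxJ (Ap : Matrix (Fin dy) (Fin my) ℝ) (h : Euc dx → Euc my) (x : Euc dx) :
    Matrix (Fin dx) (Fin dy) ℝ := (jacM h x)ᵀ * Apᵀ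

def auxC (Ap : Matrix (Fin dy) (Fin my) ℝ) (g : Euc dx → Euc dy → ℝ)
    (h : Euc dx → Euc my) (x : Euc dx) (y : Euc dy) : Matrix (Fin dx) (Fin dy) ℝ :=
  auxJ Ap h x * hessYY g x y - hessXY g x y

def auxB (V₂ : Matrix (Fin dy) (Fin k) ℝ) (g : Euc dx → Euc dy → ℝ) (x : Euc dx)
    (y : Euc dy) : Matrix (Fin k) (Fin k) ℝ := V₂ᵀ * hessYY g x y * V₂

def auxM (Ap : Matrix (Fin dy) (Fin my) ℝ) (V₂ : Matrix (Fin dy) (Fin k) ℝ)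
    (g : Euc dx → Euc dy → ℝ) (h : Euc dx → Euc my) (x : Euc dx) (y : Euc dy) :
    Matrix (Fin dx) (Fin dy) ℝ :=
  auxC Ap g h x y * V₂ * (auxB V₂ g x y)⁻¹ * V₂ᵀ - auxJ Ap h x

lemma nablaBarF_eq (Ap : Matrix (Fin dy) (Fin my) ℝ) (V₂ : Matrix (Fin dy) (Fin k) ℝ)
    (f g : Euc dx → Euc dy → ℝ) (h : Euc dx → Euc my) (x : Euc dx) (y : Euc dy) :
    nablaBarF Ap V₂ f g h x y
      = gradx f x y + toEuc (auxM Ap V₂ g h x y *ᵥ grady f x y) := rfl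

lemma auxC_diff (Ap : Matrix (Fin dy) (Fin my) ℝ) (g : Euc dx → Euc dy → ℝ)
    (h : Euc dx → Euc my) (x : Euc dx) (y₁ y₂ : Euc dy) :
    auxC Ap g h x y₁ - auxC Ap g h x y₂
      = auxJ Ap h x * (hessYY g x y₁ - hessYY g x y₂)
        - (hessXY g x y₁ - hessXY g x y₂) := by
  unfold auxC; rw [Matrix.mul_sub]; abel

lemma auxB_diff (V₂ : Matrix (Fin dy) (Fin k) ℝ) (g : Euc dx → Euc dy → ℝ) (x : Euc dx)
    (y₁ y₂ : Euc dy) :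
    V₂ᵀ * (hessYY g x y₂ - hessYY g x y₁) * V₂ = auxB V₂ g x y₂ - auxB V₂ g x y₁ := by
  unfold auxB; rw [Matrix.mul_sub, Matrix.sub_mul]

lemma auxM_diff (Ap : Matrix (Fin dy) (Fin my) ℝ) (V₂ : Matrix (Fin dy) (Fin k) ℝ)
    (g : Euc dx → Euc dy → ℝ) (h : Euc dx → Euc my) (x : Euc dx) (y₁ y₂ : Euc dy) :
    auxM Ap V₂ g h x y₁ - auxM Ap V₂ g h x y₂
      = (auxC Ap g h x y₁ - auxC Ap g h x y₂) * (V₂ * (auxB V₂ g x y₁)⁻¹ * V₂ᵀ)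
        + auxC Ap g h x y₂ * (V₂ * ((auxB V₂ g x y₁)⁻¹ - (auxB V₂ g x y₂)⁻¹) * V₂ᵀ) := by
  unfold auxM
  simp only [Matrix.sub_mul, Matrix.mul_sub, Matrix.mul_assoc]
  abel

lemma auxB_psd (V₂ : Matrix (Fin dy) (Fin k) ℝ) (hV₂orth : V₂ᵀ * V₂ = 1)
    (g : Euc dx → Euc dy → ℝ) (x : Euc dx) (y : Euc dy) {μg : ℝ}
    (hpsd : (hessYY g x y - μg • (1 : Matrix (Fin dy) (Fin dy) ℝ)).PosSemidef) :
    (auxB V₂ g x y - μg • (1 : Matrix (Fin k) (Fin k) ℝ)).PosSemidef := by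
  have h0 := hpsd.conjTranspose_mul_mul_same V₂
  have hsm : V₂ᵀ * (μg • (1 : Matrix (Fin dy) (Fin dy) ℝ)) * V₂
      = μg • (1 : Matrix (Fin k) (Fin k) ℝ) := by
    rw [Matrix.mul_smul, Matrix.mul_one, Matrix.smul_mul, hV₂orth]
  have he : V₂ᴴ * (hessYY g x y - μg • 1) * V₂
      = auxB V₂ g x y - μg • (1 : Matrix (Fin k) (Fin k) ℝ) := by
    rw [← transpose_eq_conjT, Matrix.mul_sub, Matrix.sub_mul, hsm]; rfl
  rwa [he] at h0

end Aux
set_option maxHeartbeats 1000000 in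
/-- Lipschitz continuity of `∇̄f(x,·)` in the lower-level variable. -/
theorem nablaBarF_lipschitz_in_y
    {dx dy my k : ℕ}
    (A : Matrix (Fin my) (Fin dy) ℝ) (Ap : Matrix (Fin dy) (Fin my) ℝ)
    (hMP : IsMoorePenrose A Ap)
    (V₂ : Matrix (Fin dy) (Fin k) ℝ)
    (hV₂orth : V₂ᵀ * V₂ = 1)
    (hV₂ker : LinearMap.range V₂.mulVecLin = LinearMap.ker A.mulVecLin)
    (f g : Euc dx → Euc dy → ℝ) (h : Euc dx → Euc my)
    (x : Euc dx)
    (ℓf0 ℓf1 μg ℓg1 ℓg2 ℓh0 : ℝ) (hμ : 0 < μg)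
    (hfy0 : ∀ y : Euc dy, ‖grady f x y‖ ≤ ℓf0)
    (hfx_lip : ∀ y₁ y₂ : Euc dy, ‖gradx f x y₁ - gradx f x y₂‖ ≤ ℓf1 * ‖y₁ - y₂‖)
    (hfy_lip : ∀ y₁ y₂ : Euc dy, ‖grady f x y₁ - grady f x y₂‖ ≤ ℓf1 * ‖y₁ - y₂‖)
    (hsymm : ∀ y : Euc dy, (hessYY g x y).IsSymm)
    (hpsd : ∀ y : Euc dy,
      (hessYY g x y - μg • (1 : Matrix (Fin dy) (Fin dy) ℝ)).PosSemidef)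
    (hyyn : ∀ y : Euc dy, specNorm (hessYY g x y) ≤ ℓg1)
    (hxyn : ∀ y : Euc dy, specNorm (hessXY g x y) ≤ ℓg1)
    (hyy_lip : ∀ y₁ y₂ : Euc dy,
      specNorm (hessYY g x y₁ - hessYY g x y₂) ≤ ℓg2 * ‖y₁ - y₂‖)
    (hxy_lip : ∀ y₁ y₂ : Euc dy,
      specNorm (hessXY g x y₁ - hessXY g x y₂) ≤ ℓg2 * ‖y₁ - y₂‖)
    (hjh : specNorm (jacM h x) ≤ ℓh0)
    (Lf : ℝ)
    (hLf : Lf = (1 + ℓh0 * specNorm Ap) *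
      (ℓf1 + (ℓg1 * ℓf1 + ℓf0 * ℓg2) / μg + ℓf0 * ℓg1 * ℓg2 / μg ^ 2)) :
    ∀ y₁ y₂ : Euc dy,
      ‖nablaBarF Ap V₂ f g h x y₁ - nablaBarF Ap V₂ f g h x y₂‖ ≤ Lf * ‖y₁ - y₂‖ := by
  intro y₁ y₂
  by_cases hyy : y₁ = y₂
  · subst hyy; simp
  simp only [specNorm_eq] at hyyn hxyn hyy_lip hxy_lip hjh hLf
  have ht : 0 < ‖y₁ - y₂‖ := norm_pos_iff.mpr (sub_ne_zero.mpr hyy)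
  -- nonnegativity of constants
  have ha : (0:ℝ) ≤ ‖Ap‖ := norm_nonneg _
  have hh0 : 0 ≤ ℓh0 := le_trans (norm_nonneg _) hjh
  have hg1 : 0 ≤ ℓg1 := le_trans (norm_nonneg _) (hyyn y₁)
  have hf0 : 0 ≤ ℓf0 := le_trans (norm_nonneg _) (hfy0 y₁)
  have hf1 : 0 ≤ ℓf1 := by
    nlinarith [hfy_lip y₁ y₂, norm_nonneg (grady f x y₁ - grady f x y₂)]
  have hg2 : 0 ≤ ℓg2 := by
    nlinarith [hyy_lip y₁ y₂, norm_nonneg (hessYY g x y₁ - hessYY g x y₂)]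
  have hμ' : (0:ℝ) ≤ 1/μg := by positivity
  have hc0 : 0 ≤ ℓh0 * ‖Ap‖ := mul_nonneg hh0 ha
  -- norm facts
  have hBpsd : ∀ y : Euc dy,
      (auxB V₂ g x y - μg • (1 : Matrix (Fin k) (Fin k) ℝ)).PosSemidef :=
    fun y => auxB_psd V₂ hV₂orth g x y (hpsd y)
  have hInv := fun y : Euc dy => inv_bound hμ (auxB V₂ g x y) (hBpsd y)
  have hBinv_n : ∀ y, ‖(auxB V₂ g x y)⁻¹‖ ≤ 1/μg := fun y => (hInv y).2.2
  have hV2 : ‖V₂‖ ≤ 1 := norm_V2_le V₂ hV₂orth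
  have hV2t : ‖V₂ᵀ‖ ≤ 1 := by rw [l2_norm_transpose]; exact hV2
  have hJn : ‖auxJ Ap h x‖ ≤ ℓh0 * ‖Ap‖ :=
    norm_mul_le_of (by rw [l2_norm_transpose]; exact hjh) (le_of_eq (l2_norm_transpose Ap))
  have hCn : ∀ y, ‖auxC Ap g h x y‖ ≤ (ℓh0 * ‖Ap‖ + 1) * ℓg1 := by
    intro y
    calc ‖auxC Ap g h x y‖ ≤ ‖auxJ Ap h x * hessYY g x y‖ + ‖hessXY g x y‖ :=
          norm_sub_le _ _
      _ ≤ ℓh0 * ‖Ap‖ * ℓg1 + ℓg1 := add_le_add (norm_mul_le_of hJn (hyyn y)) (hxyn y)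
      _ = (ℓh0 * ‖Ap‖ + 1) * ℓg1 := by ring
  have hCd : ‖auxC Ap g h x y₁ - auxC Ap g h x y₂‖
      ≤ (ℓh0 * ‖Ap‖ + 1) * (ℓg2 * ‖y₁ - y₂‖) := by
    rw [auxC_diff]
    calc ‖_‖ ≤ ‖auxJ Ap h x * (hessYY g x y₁ - hessYY g x y₂)‖
        + ‖hessXY g x y₁ - hessXY g x y₂‖ := norm_sub_le _ _
      _ ≤ ℓh0 * ‖Ap‖ * (ℓg2 * ‖y₁ - y₂‖) + ℓg2 * ‖y₁ - y₂‖ :=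
          add_le_add (norm_mul_le_of hJn (hyy_lip y₁ y₂)) (hxy_lip y₁ y₂)
      _ = (ℓh0 * ‖Ap‖ + 1) * (ℓg2 * ‖y₁ - y₂‖) := by ring
  have hBd : ‖(auxB V₂ g x y₁)⁻¹ - (auxB V₂ g x y₂)⁻¹‖
      ≤ 1/μg * (ℓg2 * ‖y₁ - y₂‖) * (1/μg) := by
    rw [inv_diff hμ _ _ (hBpsd y₁) (hBpsd y₂), ← auxB_diff]
    have hmid : ‖V₂ᵀ * (hessYY g x y₂ - hessYY g x y₁) * V₂‖ ≤ ℓg2 * ‖y₁ - y₂‖ := by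
      have hl := hyy_lip y₂ y₁
      rw [norm_sub_rev y₂ y₁] at hl
      calc ‖_‖ ≤ 1 * (ℓg2 * ‖y₁ - y₂‖) * 1 := norm_mul_le_of (norm_mul_le_of hV2t hl) hV2
        _ = ℓg2 * ‖y₁ - y₂‖ := by ring
    exact norm_mul_le_of (norm_mul_le_of (hBinv_n y₁) hmid) (hBinv_n y₂)
  have hMn : ‖auxM Ap V₂ g h x y₁‖ ≤ (ℓh0 * ‖Ap‖ + 1) * ℓg1 * (1/μg) + ℓh0 * ‖Ap‖ := by
    calc ‖auxM Ap V₂ g h x y₁‖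
        ≤ ‖auxC Ap g h x y₁ * V₂ * (auxB V₂ g x y₁)⁻¹ * V₂ᵀ‖ + ‖auxJ Ap h x‖ :=
          norm_sub_le _ _
      _ ≤ (ℓh0 * ‖Ap‖ + 1) * ℓg1 * 1 * (1/μg) * 1 + ℓh0 * ‖Ap‖ :=
          add_le_add (norm_mul_le_of (norm_mul_le_of
            (norm_mul_le_of (hCn y₁) hV2) (hBinv_n y₁)) hV2t) hJn
      _ = (ℓh0 * ‖Ap‖ + 1) * ℓg1 * (1/μg) + ℓh0 * ‖Ap‖ := by ring
  have hMd : ‖auxM Ap V₂ g h x y₁ - auxM Ap V₂ g h x y₂‖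
      ≤ ((ℓh0 * ‖Ap‖ + 1) * (ℓg2 * ‖y₁ - y₂‖)) * (1/μg)
        + ((ℓh0 * ‖Ap‖ + 1) * ℓg1) * (1/μg * (ℓg2 * ‖y₁ - y₂‖) * (1/μg)) := by
    rw [auxM_diff]
    have hP1 : ‖V₂ * (auxB V₂ g x y₁)⁻¹ * V₂ᵀ‖ ≤ 1/μg := by
      calc ‖_‖ ≤ 1 * (1/μg) * 1 := norm_mul_le_of (norm_mul_le_of hV2 (hBinv_n y₁)) hV2t
        _ = 1/μg := by ring
    have hPd : ‖V₂ * ((auxB V₂ g x y₁)⁻¹ - (auxB V₂ g x y₂)⁻¹) * V₂ᵀ‖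
        ≤ 1/μg * (ℓg2 * ‖y₁ - y₂‖) * (1/μg) := by
      calc ‖_‖ ≤ 1 * (1/μg * (ℓg2 * ‖y₁ - y₂‖) * (1/μg)) * 1 :=
            norm_mul_le_of (norm_mul_le_of hV2 hBd) hV2t
        _ = 1/μg * (ℓg2 * ‖y₁ - y₂‖) * (1/μg) := by ring
    exact le_trans (norm_add_le _ _)
      (add_le_add (norm_mul_le_of hCd hP1) (norm_mul_le_of (hCn y₂) hPd))
  -- splitting the difference
  have hsplit : nablaBarF Ap V₂ f g h x y₁ - nablaBarF Ap V₂ f g h x y₂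
      = (gradx f x y₁ - gradx f x y₂)
        + (toEuc (auxM Ap V₂ g h x y₁ *ᵥ (grady f x y₁ - grady f x y₂))
          + toEuc ((auxM Ap V₂ g h x y₁ - auxM Ap V₂ g h x y₂) *ᵥ grady f x y₂)) := by
    rw [nablaBarF_eq, nablaBarF_eq, add_sub_add_comm]
    congr 1
    have h0 : (auxM Ap V₂ g h x y₁ *ᵥ (grady f x y₁ : Fin dy → ℝ))
          - (auxM Ap V₂ g h x y₂ *ᵥ (grady f x y₂ : Fin dy → ℝ))
        = auxM Ap V₂ g h x y₁ *ᵥ ((grady f x y₁ : Fin dy → ℝ) - (grady f x y₂ : Fin dy → ℝ))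
          + (auxM Ap V₂ g h x y₁ - auxM Ap V₂ g h x y₂) *ᵥ (grady f x y₂ : Fin dy → ℝ) := by
      rw [Matrix.mulVec_sub, Matrix.sub_mulVec]; abel
    exact congrArg toEuc h0
  have hK1 : (0:ℝ) ≤ (ℓh0 * ‖Ap‖ + 1) * ℓg1 * (1/μg) + ℓh0 * ‖Ap‖ :=
    add_nonneg (mul_nonneg (mul_nonneg (by linarith) hg1) hμ') hc0
  have hK2 : (0:ℝ) ≤ ((ℓh0 * ‖Ap‖ + 1) * (ℓg2 * ‖y₁ - y₂‖)) * (1/μg)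
      + ((ℓh0 * ‖Ap‖ + 1) * ℓg1) * (1/μg * (ℓg2 * ‖y₁ - y₂‖) * (1/μg)) :=
    add_nonneg (mul_nonneg (mul_nonneg (by linarith) (mul_nonneg hg2 ht.le)) hμ')
      (mul_nonneg (mul_nonneg (by linarith) hg1)
        (mul_nonneg (mul_nonneg hμ' (mul_nonneg hg2 ht.le)) hμ'))
  have main : ‖nablaBarF Ap V₂ f g h x y₁ - nablaBarF Ap V₂ f g h x y₂‖
      ≤ ℓf1 * ‖y₁ - y₂‖
        + (((ℓh0 * ‖Ap‖ + 1) * ℓg1 * (1/μg) + ℓh0 * ‖Ap‖) * (ℓf1 * ‖y₁ - y₂‖)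
          + (((ℓh0 * ‖Ap‖ + 1) * (ℓg2 * ‖y₁ - y₂‖)) * (1/μg)
            + ((ℓh0 * ‖Ap‖ + 1) * ℓg1) * (1/μg * (ℓg2 * ‖y₁ - y₂‖) * (1/μg))) * ℓf0) := by
    rw [hsplit]
    refine le_trans (norm_add_le _ _) (add_le_add (hfx_lip y₁ y₂)
      (le_trans (norm_add_le _ _) (add_le_add ?_ ?_)))
    · exact le_trans (norm_toEuc_mulVec_le (auxM Ap V₂ g h x y₁)
        (grady f x y₁ - grady f x y₂))
        (mul_le_mul hMn (hfy_lip y₁ y₂) (norm_nonneg _) hK1)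
    · exact le_trans (norm_toEuc_mulVec_le
        (auxM Ap V₂ g h x y₁ - auxM Ap V₂ g h x y₂) (grady f x y₂))
        (mul_le_mul hMd (hfy0 y₂) (norm_nonneg _) hK2)
  refine le_trans main (le_of_eq ?_)
  rw [hLf]
  field_simp
  ring
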